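/- For n ≥ 3 and 2π < |x| ≤ πn, setting t = |x|/(2n), one has Σ_{i=1}^n sin²(it) > n/4. -/

import Mathlib

open Real Finset

lemma tele_sum (t : ℝ) (n : ℕ) :
    ∑ i ∈ Finset.Icc 1 n, 2 * Real.sin t * Real.cos (2 * (i : ℝ) * t)
      = Real.sin ((2 * n + 1) * t) - Real.sin t := by
  induction n with
  | zero => simp
  | succ m ih =>
      rw [Finset.sum_Icc_succ_top (by omega), ih]
      have h1 : Real.sin ((2 * (m : ℝ) + 3) * t)
          = Real.sin ((2 * (m : ℝ) + 1) * t) * Real.cos (2 * t)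
            + Real.cos ((2 * (m : ℝ) + 1) * t) * Real.sin (2 * t) := by
        rw [← Real.sin_add]; ring_nf
      push_cast
      rw [show ((2 : ℝ) * (m + 1) + 1) * t = (2 * (m : ℝ) + 3) * t by ring, h1,
        Real.sin_two_mul, Real.cos_two_mul']
      have h2 : Real.cos (2 * ((m : ℝ) + 1) * t)
          = Real.cos ((2 * (m : ℝ) + 1) * t) * Real.cos t
            - Real.sin ((2 * (m : ℝ) + 1) * t) * Real.sin t := by
        rw [← Real.cos_add]; ring_nf
      rw [h2]; linear_combination (-Real.sin ((2 * (m : ℝ) + 1) * t)) * Real.sin_sq_add_cos_sq t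

theorem stmt7 (n : ℕ) (hn : 3 ≤ n) (x : ℝ)
    (h1 : 2 * Real.pi < |x|) (h2 : |x| ≤ Real.pi * n) :
    (n : ℝ) / 4 < ∑ i ∈ Finset.Icc 1 n, Real.sin ((i : ℝ) * (|x| / (2 * n))) ^ 2 := by
  have hpi := Real.pi_pos
  have hn0 : (0 : ℝ) < n := by positivity
  set t : ℝ := |x| / (2 * n) with ht
  have ht0 : 0 < t := by
    have : 0 < |x| := by linarith
    positivity
  have ht2 : t ≤ Real.pi / 2 := by
    rw [ht, div_le_div_iff₀ (by positivity) (by norm_num)]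
    nlinarith
  have htn : Real.pi / n < t := by
    rw [ht, div_lt_div_iff₀ hn0 (by positivity)]
    nlinarith
  have hsin : 2 / n < Real.sin t := by
    have hb := Real.mul_le_sin ht0.le ht2
    have : 2 / Real.pi * (Real.pi / n) < 2 / Real.pi * t := by
      apply mul_lt_mul_of_pos_left htn (by positivity)
    calc 2 / (n : ℝ) = 2 / Real.pi * (Real.pi / n) := by
          field_simp
      _ < 2 / Real.pi * t := this
      _ ≤ Real.sin t := hb
  have hsin0 : 0 < Real.sin t := lt_trans (by positivity) hsin
  -- sum of cosines
  have hc : ∑ i ∈ Finset.Icc 1 n, Real.cos (2 * (i : ℝ) * t)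
      = (Real.sin ((2 * n + 1) * t) - Real.sin t) / (2 * Real.sin t) := by
    rw [eq_div_iff (by positivity), ← tele_sum t n, Finset.sum_mul]
    apply Finset.sum_congr rfl
    intro i _; ring
  have hs : ∑ i ∈ Finset.Icc 1 n, Real.sin ((i : ℝ) * t) ^ 2
      = (n : ℝ) / 2 - (Real.sin ((2 * n + 1) * t) - Real.sin t) / (4 * Real.sin t) := by
    have : ∀ i ∈ Finset.Icc 1 n, Real.sin ((i : ℝ) * t) ^ 2
        = 1 / 2 - Real.cos (2 * (i : ℝ) * t) / 2 := by
      intro i _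
      rw [Real.sin_sq_eq_half_sub]; ring_nf
    rw [Finset.sum_congr rfl this, Finset.sum_sub_distrib, Finset.sum_const,
      Nat.card_Icc, ← Finset.sum_div, hc]
    simp only [Nat.add_sub_cancel, nsmul_eq_mul]
    field_simp
    ring
  rw [hs]
  have hkey : (Real.sin ((2 * n + 1) * t) - Real.sin t) / (4 * Real.sin t) < (n : ℝ) / 4 := by
    rw [div_lt_iff₀ (by positivity)]
    have h3 : Real.sin ((2 * n + 1) * t) ≤ 1 := Real.sin_le_one _
    have h4 : -1 ≤ Real.sin t := Real.neg_one_le_sin _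
    have h5 : 2 < (n : ℝ) * Real.sin t := by
      have := (div_lt_iff₀ hn0).mp hsin
      linarith [mul_comm (Real.sin t) (n : ℝ)]
    nlinarith
  linarith
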